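/- Let R > 0, β ∈ (0,1/4), C̃ = ∫_β^{1/2} g(t) dt > 0, and assume f(Rφ(β))/R > 1/(2φ(β)C̃). Then for every v ∈ K with ‖v‖ = 1 one has ∫₀¹ f(R v(t)) g(t) v(t) dt > R. -/
import Mathlib


open Set

/-- `φ(t) = t(1-2t)`. -/
noncomputable def phi (t : ℝ) : ℝ := t * (1 - 2 * t)

/-- The `H¹₀` (energetic) norm `‖u‖ = (∫₀¹ u'(t)² dt)^{1/2}`. -/
noncomputable def normH (u : ℝ → ℝ) : ℝ := Real.sqrt (∫ t in (0:ℝ)..1, deriv u t ^ 2)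

/-- Membership in the cone `K`: continuously differentiable on `[0,1]`, vanishing at the
endpoints, symmetric about `1/2`, nondecreasing on `[0,1/2]`, and satisfying the Harnack
inequality `u(t) ≥ φ(t)‖u‖` on `[0,1/2]`. -/
def memK (u : ℝ → ℝ) : Prop :=
  (∀ t ∈ Icc (0:ℝ) 1, DifferentiableAt ℝ u t) ∧
  ContinuousOn (deriv u) (Icc (0:ℝ) 1) ∧
  u 0 = 0 ∧ u 1 = 0 ∧
  (∀ t ∈ Icc (0:ℝ) 1, u t = u (1 - t)) ∧
  MonotoneOn u (Icc (0:ℝ) (1/2)) ∧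
  (∀ t ∈ Icc (0:ℝ) (1/2), phi t * normH u ≤ u t)

/-- Upper estimate at radius `R`: under `f(Rφ(β))/R > 1/(2φ(β)C̃)`,
the fibering derivative is negative at the outer radius. -/
theorem fibering_negative_at_R
    (f : ℝ → ℝ) (hf : ContDiff ℝ 1 f)
    (hfmono : MonotoneOn f (Ici (0:ℝ)))
    (hf0 : 0 ≤ f 0) (hfpos : ∀ t : ℝ, 0 < t → 0 < f t)
    (g : ℝ → ℝ) (hgnonneg : ∀ t ∈ Icc (0:ℝ) 1, 0 ≤ g t)
    (hgbdd : ∃ M : ℝ, ∀ t ∈ Icc (0:ℝ) 1, g t ≤ M)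
    (hgmeas : Measurable g)
    (hgmono : MonotoneOn g (Icc (0:ℝ) (1/2)))
    (hgsymm : ∀ t ∈ Icc (0:ℝ) (1/2), g t = g (1 - t))
    (R : ℝ) (hR : 0 < R)
    (β : ℝ) (hβ : β ∈ Ioo (0:ℝ) (1/4))
    (Ctil : ℝ) (hCtil : Ctil = ∫ t in β..(1/2:ℝ), g t) (hCpos : 0 < Ctil)
    (hH1 : f (R * phi β) / R > 1 / (2 * phi β * Ctil)) :
    ∀ v : ℝ → ℝ, memK v → normH v = 1 →
      (∫ t in (0:ℝ)..1, f (R * v t) * g t * v t) > R := by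
  intro v hv hnorm
  obtain ⟨hdiff, hdercont, hv0, hv1, hsymm, hmono, hharnack⟩ := hv
  have hβ0 : 0 < β := hβ.1
  have hβ4 : β < 1/4 := hβ.2
  have hφβ : 0 < phi β := by unfold phi; nlinarith
  have huIcc : uIcc (0:ℝ) 1 = Icc (0:ℝ) 1 := uIcc_of_le (by norm_num)
  -- v continuous on [0,1]
  have hvcont : ContinuousOn v (Icc (0:ℝ) 1) := fun t ht =>
    (hdiff t ht).continuousAt.continuousWithinAt
  -- Harnack with norm 1
  have hhar : ∀ t ∈ Icc (0:ℝ) (1/2), phi t ≤ v t := by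
    intro t ht
    have := hharnack t ht
    rwa [hnorm, mul_one] at this
  -- v nonneg on [0,1]
  have hvnonneg : ∀ t ∈ Icc (0:ℝ) 1, 0 ≤ v t := by
    intro t ht
    rcases le_or_gt t (1/2) with h | h
    · have ht' : t ∈ Icc (0:ℝ) (1/2) := ⟨ht.1, h⟩
      have := hhar t ht'
      have hφ : 0 ≤ phi t := by unfold phi; nlinarith [ht.1]
      linarith
    · have h1t : (1 - t) ∈ Icc (0:ℝ) (1/2) := ⟨by linarith [ht.2], by linarith⟩
      have hsy := hsymm t ht
      have := hhar (1 - t) h1t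
      have hφ : 0 ≤ phi (1 - t) := by
        unfold phi; nlinarith [ht.2, h1t.1]
      rw [hsy]; linarith
  -- v ≥ φ(β) on [β, 1-β]
  have hvlow : ∀ t ∈ Icc β (1 - β), phi β ≤ v t := by
    intro t ht
    rcases le_or_gt t (1/2) with h | h
    · have hβmem : β ∈ Icc (0:ℝ) (1/2) := ⟨le_of_lt hβ0, by linarith⟩
      have htmem : t ∈ Icc (0:ℝ) (1/2) := ⟨by linarith [ht.1], h⟩
      calc phi β ≤ v β := hhar β hβmem
        _ ≤ v t := hmono hβmem htmem ht.1
    · have ht01 : t ∈ Icc (0:ℝ) 1 := ⟨by linarith [ht.1], by linarith [ht.2]⟩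
      have hβmem : β ∈ Icc (0:ℝ) (1/2) := ⟨le_of_lt hβ0, by linarith⟩
      have h1t : (1 - t) ∈ Icc (0:ℝ) (1/2) := ⟨by linarith [ht.2], by linarith⟩
      rw [hsymm t ht01]
      calc phi β ≤ v β := hhar β hβmem
        _ ≤ v (1 - t) := hmono hβmem h1t (by linarith [ht.2])
  -- integrability of g on [0,1]
  obtain ⟨M, hM⟩ := hgbdd
  have hgint : IntervalIntegrable g MeasureTheory.volume 0 1 := by
    have hc : IntervalIntegrable (fun _ : ℝ => M) MeasureTheory.volume 0 1 :=
      intervalIntegrable_const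
    refine hc.mono_fun' hgmeas.aestronglyMeasurable ?_
    filter_upwards [MeasureTheory.ae_restrict_mem measurableSet_uIoc] with x hx
    have hx' : x ∈ Icc (0:ℝ) 1 := by
      rw [uIoc_of_le (by norm_num : (0:ℝ) ≤ 1)] at hx
      exact ⟨le_of_lt hx.1, hx.2⟩
    rw [Real.norm_eq_abs, abs_of_nonneg (hgnonneg x hx')]
    exact hM x hx'
  -- continuity of t ↦ f (R * v t) on [0,1]
  have hfvcont : ContinuousOn (fun t => f (R * v t)) (Icc (0:ℝ) 1) :=
    hf.continuous.comp_continuousOn (continuousOn_const.mul hvcont)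
  -- integrability of the main integrand on [0,1]
  have hhint : IntervalIntegrable (fun t => f (R * v t) * g t * v t)
      MeasureTheory.volume 0 1 := by
    have h1 : IntervalIntegrable (fun t => f (R * v t) * g t)
        MeasureTheory.volume 0 1 := by
      refine hgint.continuousOn_mul ?_
      rw [huIcc]; exact hfvcont
    have h2 := h1.mul_continuousOn (by rw [huIcc]; exact hvcont)
    exact h2
  have hsub : ∀ a b : ℝ, 0 ≤ a → a ≤ b → b ≤ 1 →
      IntervalIntegrable (fun t => f (R * v t) * g t * v t) MeasureTheory.volume a b := by
    intro a b ha hab hb1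
    refine hhint.mono_set ?_
    rw [huIcc, uIcc_of_le hab]
    exact Icc_subset_Icc ha hb1
  have hgsub : ∀ a b : ℝ, 0 ≤ a → a ≤ b → b ≤ 1 →
      IntervalIntegrable g MeasureTheory.volume a b := by
    intro a b ha hab hb1
    refine hgint.mono_set ?_
    rw [huIcc, uIcc_of_le hab]
    exact Icc_subset_Icc ha hb1
  have hβ1 : β ≤ 1 - β := by linarith
  have h1β1 : (1:ℝ) - β ≤ 1 := by linarith
  have hβ12 : β ≤ 1/2 := by linarith
  have h121β : (1:ℝ)/2 ≤ 1 - β := by linarith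
  -- nonnegativity of the integrand on [0,1]
  have hnn : ∀ t ∈ Icc (0:ℝ) 1, 0 ≤ f (R * v t) * g t * v t := by
    intro t ht
    have hvt := hvnonneg t ht
    have hRvt : (0:ℝ) ≤ R * v t := mul_nonneg hR.le hvt
    have hfval : 0 ≤ f (R * v t) :=
      le_trans hf0 (hfmono (le_refl (0:ℝ) : (0:ℝ) ∈ Ici (0:ℝ)) hRvt hRvt)
    exact mul_nonneg (mul_nonneg hfval (hgnonneg t ht)) hvt
  -- step 1 : the whole integral dominates the integral over [β, 1-β]
  have step1 : (∫ t in β..(1-β), f (R * v t) * g t * v t)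
      ≤ ∫ t in (0:ℝ)..1, f (R * v t) * g t * v t := by
    have e1 : (∫ t in (0:ℝ)..β, f (R * v t) * g t * v t)
        + (∫ t in β..(1-β), f (R * v t) * g t * v t)
        = ∫ t in (0:ℝ)..(1-β), f (R * v t) * g t * v t :=
      intervalIntegral.integral_add_adjacent_intervals
        (hsub 0 β le_rfl hβ0.le (by linarith)) (hsub β (1-β) hβ0.le hβ1 h1β1)
    have e2 : (∫ t in (0:ℝ)..(1-β), f (R * v t) * g t * v t)
        + (∫ t in (1-β)..1, f (R * v t) * g t * v t)
        = ∫ t in (0:ℝ)..1, f (R * v t) * g t * v t :=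
      intervalIntegral.integral_add_adjacent_intervals
        (hsub 0 (1-β) le_rfl (by linarith) h1β1) (hsub (1-β) 1 (by linarith) h1β1 le_rfl)
    have p1 : 0 ≤ ∫ t in (0:ℝ)..β, f (R * v t) * g t * v t := by
      apply intervalIntegral.integral_nonneg hβ0.le
      intro t ht
      exact hnn t ⟨ht.1, le_trans ht.2 (by linarith)⟩
    have p2 : 0 ≤ ∫ t in (1-β)..1, f (R * v t) * g t * v t := by
      apply intervalIntegral.integral_nonneg h1β1
      intro t ht
      exact hnn t ⟨le_trans (by linarith : (0:ℝ) ≤ 1 - β) ht.1, ht.2⟩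
    linarith
  -- step 2 : lower bound on [β, 1-β]
  have step2 : (∫ t in β..(1-β), f (R * phi β) * phi β * g t)
      ≤ ∫ t in β..(1-β), f (R * v t) * g t * v t := by
    apply intervalIntegral.integral_mono_on hβ1
    · have : IntervalIntegrable (fun t => f (R * phi β) * phi β * g t)
          MeasureTheory.volume β (1-β) := by
        simpa [mul_assoc] using (hgsub β (1-β) hβ0.le hβ1 h1β1).const_mul (f (R * phi β) * phi β)
      exact this
    · exact hsub β (1-β) hβ0.le hβ1 h1β1
    · intro t ht
      have ht01 : t ∈ Icc (0:ℝ) 1 := ⟨le_trans hβ0.le ht.1, le_trans ht.2 h1β1⟩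
      have hvt := hvlow t ht
      have hvt0 : 0 ≤ v t := le_trans hφβ.le hvt
      have hRφ : (0:ℝ) ≤ R * phi β := mul_nonneg hR.le hφβ.le
      have hRv : R * phi β ≤ R * v t := by nlinarith
      have hfle : f (R * phi β) ≤ f (R * v t) :=
        hfmono hRφ (le_trans hRφ hRv) hRv
      have hf1 : 0 ≤ f (R * phi β) :=
        le_trans hf0 (hfmono (le_refl (0:ℝ) : (0:ℝ) ∈ Ici (0:ℝ)) hRφ hRφ)
      have hg0 := hgnonneg t ht01
      have hA : 0 ≤ (f (R * v t) - f (R * phi β)) * phi β * g t :=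
        mul_nonneg (mul_nonneg (sub_nonneg.mpr hfle) hφβ.le) hg0
      have hB : 0 ≤ f (R * v t) * (v t - phi β) * g t :=
        mul_nonneg (mul_nonneg (le_trans hf1 hfle) (sub_nonneg.mpr hvt)) hg0
      nlinarith [hA, hB]
  -- step 3 : compute the integral of g over [β, 1-β]
  have hgrefl : (∫ t in (1/2:ℝ)..(1-β), g t) = ∫ t in β..(1/2:ℝ), g t := by
    have h1 : (∫ t in β..(1/2:ℝ), g (1 - t)) = ∫ t in (1-(1/2:ℝ))..(1-β), g t := by
      simpa using intervalIntegral.integral_comp_sub_left (a := β) (b := 1/2) g 1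
    have h2 : (∫ t in β..(1/2:ℝ), g (1 - t)) = ∫ t in β..(1/2:ℝ), g t := by
      apply intervalIntegral.integral_congr
      intro t ht
      rw [uIcc_of_le hβ12] at ht
      exact (hgsymm t ⟨le_trans hβ0.le ht.1, ht.2⟩).symm
    rw [← h2, h1]
    norm_num
  have hgtot : (∫ t in β..(1-β), g t) = 2 * Ctil := by
    have e : (∫ t in β..(1/2:ℝ), g t) + (∫ t in (1/2:ℝ)..(1-β), g t)
        = ∫ t in β..(1-β), g t :=
      intervalIntegral.integral_add_adjacent_intervals
        (hgsub β (1/2) hβ0.le hβ12 (by norm_num))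
        (hgsub (1/2) (1-β) (by norm_num) h121β h1β1)
    rw [← e, hgrefl, hCtil]; ring
  have step3 : (∫ t in β..(1-β), f (R * phi β) * phi β * g t)
      = f (R * phi β) * phi β * (2 * Ctil) := by
    rw [intervalIntegral.integral_const_mul, hgtot]
  -- step 4 : arithmetic from the hypothesis hH1
  have hfRφ : 0 < f (R * phi β) := hfpos _ (mul_pos hR hφβ)
  have hden : 0 < 2 * phi β * Ctil := by positivity
  have key : R < f (R * phi β) * phi β * (2 * Ctil) := by
    have := (div_lt_div_iff₀ hden hR).mp hH1
    nlinarith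
  linarith [step1, step2]
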